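/- The functional G : L²(Ω, μ) → ℝ is Fréchet differentiable at every u ∈ L²(Ω, μ), with derivative the bounded linear map h ↦ ∫_{Ω₁} φ(u(x))·h(x) dμ(x). -/

import Mathlib

open MeasureTheory

noncomputable def phi (c₀ c₁ : ℝ) (z : ℝ) : ℝ :=
  if z ≤ c₀ then (c₀ - z) / (c₁ - z) else 0

noncomputable def F (c₀ c₁ : ℝ) (s : ℝ) : ℝ :=
  if s ≤ c₀ then s + (c₁ - c₀) * Real.log ((c₁ - s) / c₁)
  else c₀ + (c₁ - c₀) * Real.log ((c₁ - c₀) / c₁)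

section aux
variable {c₀ c₁ : ℝ}

lemma phi_eq (z : ℝ) : phi c₀ c₁ z = (c₀ - min z c₀) / (c₁ - min z c₀) := by
  unfold phi
  split_ifs with h
  · rw [min_eq_left h]
  · rw [min_eq_right (le_of_lt (lt_of_not_ge h))]
    simp

lemma F_eq (s : ℝ) :
    F c₀ c₁ s = min s c₀ + (c₁ - c₀) * Real.log ((c₁ - min s c₀) / c₁) := by
  unfold F
  split_ifs with h
  · rw [min_eq_left h]
  · rw [min_eq_right (le_of_lt (lt_of_not_ge h))]

lemma continuous_phi (hc : c₀ < c₁) : Continuous (phi c₀ c₁) := by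
  have hfun : phi c₀ c₁ = fun z => (c₀ - min z c₀) / (c₁ - min z c₀) :=
    funext fun z => phi_eq z
  rw [hfun]
  refine Continuous.div (continuous_const.sub (continuous_id.min continuous_const))
    (continuous_const.sub (continuous_id.min continuous_const)) fun z => ?_
  have := min_le_right z c₀
  intro h0
  nlinarith

lemma continuous_F (hc₀ : 0 < c₀) (hc : c₀ < c₁) : Continuous (F c₀ c₁) := by
  have hc₁ : (0:ℝ) < c₁ := hc₀.trans hc
  have hfun : F c₀ c₁ = fun s => min s c₀ + (c₁ - c₀) * Real.log ((c₁ - min s c₀) / c₁) :=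
    funext fun s => F_eq s
  rw [hfun]
  have h1 : Continuous fun s : ℝ => min s c₀ := continuous_id.min continuous_const
  have h2 : Continuous fun s : ℝ => (c₁ - min s c₀) / c₁ :=
    (continuous_const.sub h1).div_const c₁
  refine h1.add (continuous_const.mul (h2.log fun s => ?_))
  have := min_le_right s c₀
  have : 0 < (c₁ - min s c₀) / c₁ := div_pos (by linarith) hc₁
  exact ne_of_gt this

lemma phi_nonneg (hc : c₀ < c₁) (z : ℝ) : 0 ≤ phi c₀ c₁ z := by
  unfold phi
  split_ifs with h
  · exact div_nonneg (by linarith) (by linarith)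
  · exact le_refl _

lemma phi_le_one (hc : c₀ < c₁) (z : ℝ) : phi c₀ c₁ z ≤ 1 := by
  unfold phi
  split_ifs with h
  · rw [div_le_one (by linarith)]; linarith
  · exact zero_le_one

lemma phi_lip (hc : c₀ < c₁) (a b : ℝ) :
    |phi c₀ c₁ a - phi c₀ c₁ b| ≤ (c₁ - c₀)⁻¹ * |a - b| := by
  have hK : (0:ℝ) < c₁ - c₀ := by linarith
  set a' := min a c₀ with ha'
  set b' := min b c₀ with hb'
  have ha1 : a' ≤ c₀ := min_le_right _ _
  have hb1 : b' ≤ c₀ := min_le_right _ _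
  have hda : 0 < c₁ - a' := by linarith
  have hdb : 0 < c₁ - b' := by linarith
  have hab : |a' - b'| ≤ |a - b| := by
    have := abs_min_sub_min_le_max a c₀ b c₀
    simpa using this
  rw [phi_eq a, phi_eq b]
  have hexp : (c₀ - a') / (c₁ - a') - (c₀ - b') / (c₁ - b')
      = ((c₁ - c₀) * (b' - a')) / ((c₁ - a') * (c₁ - b')) := by
    field_simp
    ring
  rw [hexp, abs_div, abs_mul, abs_of_pos hK, abs_of_pos (mul_pos hda hdb),
    abs_sub_comm b' a']
  calc (c₁ - c₀) * |a' - b'| / ((c₁ - a') * (c₁ - b'))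
      ≤ (c₁ - c₀) * |a' - b'| / ((c₁ - c₀) * (c₁ - c₀)) := by
        gcongr
    _ = (c₁ - c₀)⁻¹ * |a' - b'| := by field_simp
    _ ≤ (c₁ - c₀)⁻¹ * |a - b| := by
        exact mul_le_mul_of_nonneg_left hab (inv_nonneg.mpr hK.le)

lemma F_zero (hc₀ : 0 < c₀) (hc : c₀ < c₁) : F c₀ c₁ 0 = 0 := by
  have h1 : (c₁ - (0:ℝ)) / c₁ = 1 := by
    rw [sub_zero]; exact div_self (by linarith)
  unfold F
  rw [if_pos hc₀.le, h1, Real.log_one]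
  ring

lemma hasDerivAt_F (hc₀ : 0 < c₀) (hc : c₀ < c₁) (x : ℝ) :
    HasDerivAt (F c₀ c₁) (phi c₀ c₁ x) x := by
  have hc₁ : (0:ℝ) < c₁ := hc₀.trans hc
  have hlt : ∀ y : ℝ, y < c₀ → HasDerivAt (F c₀ c₁) (phi c₀ c₁ y) y := by
    intro y hy
    have hd : 0 < c₁ - y := by linarith
    have hg : HasDerivAt (fun s : ℝ => (c₁ - s) / c₁) (-1 / c₁) y := by
      simpa using ((hasDerivAt_const y c₁).sub (hasDerivAt_id y)).div_const c₁
    have hgx : (c₁ - y) / c₁ ≠ 0 := ne_of_gt (div_pos hd hc₁)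
    have hlog := (Real.hasDerivAt_log hgx).comp y hg
    have hFl : HasDerivAt (fun s => s + (c₁ - c₀) * Real.log ((c₁ - s) / c₁))
        (1 + (c₁ - c₀) * (((c₁ - y) / c₁)⁻¹ * (-1 / c₁))) y :=
      (hasDerivAt_id y).add (hlog.const_mul (c₁ - c₀))
    have heq : F c₀ c₁ =ᶠ[nhds y] fun s => s + (c₁ - c₀) * Real.log ((c₁ - s) / c₁) := by
      filter_upwards [Iio_mem_nhds hy] with s hs
      unfold F
      rw [if_pos (le_of_lt hs)]
    have hres := hFl.congr_of_eventuallyEq heq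
    refine hres.congr_deriv ?_
    unfold phi
    rw [if_pos hy.le]
    field_simp
    ring
  have hgt : ∀ y : ℝ, c₀ < y → HasDerivAt (F c₀ c₁) (phi c₀ c₁ y) y := by
    intro y hy
    have heq : F c₀ c₁ =ᶠ[nhds y] fun _ => c₀ + (c₁ - c₀) * Real.log ((c₁ - c₀) / c₁) := by
      filter_upwards [Ioi_mem_nhds hy] with s hs
      unfold F
      rw [if_neg (not_le.mpr hs)]
    have hres := (hasDerivAt_const y (c₀ + (c₁ - c₀) * Real.log ((c₁ - c₀) / c₁))).congr_of_eventuallyEq heq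
    refine hres.congr_deriv ?_
    unfold phi
    rw [if_neg (not_le.mpr hy)]
  rcases lt_trichotomy x c₀ with h | h | h
  · exact hlt x h
  · subst h
    apply hasDerivAt_of_hasDerivAt_of_ne
    · intro y hy
      rcases hy.lt_or_gt with h' | h'
      · exact hlt y h'
      · exact hgt y h'
    · exact (continuous_F hc₀ hc).continuousAt
    · exact (continuous_phi hc).continuousAt
  · exact hgt x h

lemma F_taylor (hc₀ : 0 < c₀) (hc : c₀ < c₁) (a t : ℝ) :
    |F c₀ c₁ (a + t) - F c₀ c₁ a - phi c₀ c₁ a * t| ≤ (c₁ - c₀)⁻¹ * t ^ 2 := by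
  have hK : (0:ℝ) < c₁ - c₀ := by linarith
  set g := fun s => F c₀ c₁ s - phi c₀ c₁ a * s with hg
  have hgd : ∀ s, HasDerivAt g (phi c₀ c₁ s - phi c₀ c₁ a) s := by
    intro s
    have h2 : HasDerivAt (fun s : ℝ => phi c₀ c₁ a * s) (phi c₀ c₁ a) s := by
      simpa using (hasDerivAt_id s).const_mul (phi c₀ c₁ a)
    exact (hasDerivAt_F hc₀ hc s).sub h2
  have bound : ∀ s ∈ Set.uIcc a (a + t),
      ‖phi c₀ c₁ s - phi c₀ c₁ a‖ ≤ (c₁ - c₀)⁻¹ * |t| := by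
    intro s hs
    have h1 := phi_lip hc s a
    have h2 : |s - a| ≤ |t| := by
      rw [abs_le]
      rcases Set.mem_uIcc.1 hs with ⟨h3, h4⟩ | ⟨h3, h4⟩ <;> constructor <;>
        linarith [le_abs_self t, neg_abs_le t, abs_nonneg t]
    rw [Real.norm_eq_abs]
    calc |phi c₀ c₁ s - phi c₀ c₁ a| ≤ (c₁ - c₀)⁻¹ * |s - a| := h1
      _ ≤ (c₁ - c₀)⁻¹ * |t| := mul_le_mul_of_nonneg_left h2 (inv_nonneg.mpr hK.le)
  have hmv := Convex.norm_image_sub_le_of_norm_hasDerivWithin_le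
    (f := g) (f' := fun s => phi c₀ c₁ s - phi c₀ c₁ a)
    (fun s _ => (hgd s).hasDerivWithinAt) bound (convex_uIcc a (a + t))
    Set.left_mem_uIcc Set.right_mem_uIcc
  have he : g (a + t) - g a = F c₀ c₁ (a + t) - F c₀ c₁ a - phi c₀ c₁ a * t := by
    simp only [hg]; ring
  rw [he] at hmv
  rw [Real.norm_eq_abs] at hmv
  calc |F c₀ c₁ (a + t) - F c₀ c₁ a - phi c₀ c₁ a * t|
      ≤ (c₁ - c₀)⁻¹ * |t| * ‖a + t - a‖ := hmv
    _ = (c₁ - c₀)⁻¹ * t ^ 2 := by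
        rw [show a + t - a = t by ring, Real.norm_eq_abs]
        rw [mul_assoc, abs_mul_abs_self]
        ring

lemma F_bound (hc₀ : 0 < c₀) (hc : c₀ < c₁) (s : ℝ) : |F c₀ c₁ s| ≤ |s| := by
  have hmv := Convex.norm_image_sub_le_of_norm_hasDerivWithin_le
    (f := F c₀ c₁) (f' := phi c₀ c₁) (C := 1)
    (fun z _ => (hasDerivAt_F hc₀ hc z).hasDerivWithinAt)
    (fun z _ => by
      rw [Real.norm_eq_abs, abs_of_nonneg (phi_nonneg hc z)]
      exact phi_le_one hc z)
    (convex_uIcc 0 s) Set.left_mem_uIcc Set.right_mem_uIcc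
  simpa [F_zero hc₀ hc] using hmv

end aux

noncomputable def G (c₀ c₁ : ℝ) {Ω : Type*} [MeasurableSpace Ω] (μ : Measure Ω)
    (Ω₁ : Set Ω) (u : Lp ℝ 2 μ) : ℝ :=
  ∫ x in Ω₁, F c₀ c₁ (u x) ∂μ

theorem G_frechet_differentiable (c₀ c₁ : ℝ) (hc₀ : 0 < c₀) (hc : c₀ < c₁)
    {Ω : Type*} [MeasurableSpace Ω] (μ : Measure Ω) [IsFiniteMeasure μ]
    (Ω₁ : Set Ω) (hΩ₁ : MeasurableSet Ω₁) (u : Lp ℝ 2 μ) :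
    ∃ L : Lp ℝ 2 μ →L[ℝ] ℝ,
      (∀ h : Lp ℝ 2 μ, L h = ∫ x in Ω₁, phi c₀ c₁ (u x) * h x ∂μ) ∧
      HasFDerivAt (G c₀ c₁ μ Ω₁) L u := by
  have hc₁ : (0:ℝ) < c₁ := hc₀.trans hc
  set K := (c₁ - c₀)⁻¹ with hKdef
  have hK : 0 < K := inv_pos.mpr (by linarith)
  set w : Ω → ℝ := Ω₁.indicator (fun x => phi c₀ c₁ (u x)) with hw
  have hum : AEStronglyMeasurable (fun x => phi c₀ c₁ (u x)) μ :=
    (continuous_phi hc).comp_aestronglyMeasurable (Lp.aestronglyMeasurable u)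
  have hwm : AEStronglyMeasurable w μ := hum.indicator hΩ₁
  have hwb : ∀ x, ‖w x‖ ≤ 1 := by
    intro x
    rw [Real.norm_eq_abs]
    by_cases hx : x ∈ Ω₁
    · simp only [hw, Set.indicator_of_mem hx]
      rw [abs_of_nonneg (phi_nonneg hc _)]
      exact phi_le_one hc _
    · simp [hw, Set.indicator_of_notMem hx]
  have hwmem : MemLp w 2 μ :=
    MemLp.of_bound hwm 1 (Filter.Eventually.of_forall hwb)
  set W : Lp ℝ 2 μ := hwmem.toLp w with hW
  have hWcoe : ⇑W =ᵐ[μ] w := hwmem.coeFn_toLp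
  have hL : ∀ h : Lp ℝ 2 μ,
      (innerSL ℝ W) h = ∫ x in Ω₁, phi c₀ c₁ (u x) * h x ∂μ := by
    intro h
    have h1 : (innerSL ℝ W) h = ∫ x, W x * h x ∂μ := by
      rw [innerSL_apply_apply, L2.inner_def]
      simp [RCLike.inner_apply, mul_comm]
    have h2 : ∫ x, W x * h x ∂μ = ∫ x, w x * h x ∂μ :=
      integral_congr_ae (hWcoe.mul (Filter.EventuallyEq.refl _ _))
    have h3 : ∀ x, w x * h x = Ω₁.indicator (fun x => phi c₀ c₁ (u x) * h x) x := by
      intro x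
      by_cases hx : x ∈ Ω₁ <;> simp [hw, hx]
    rw [h1, h2]
    simp_rw [h3]
    exact integral_indicator hΩ₁
  refine ⟨innerSL ℝ W, hL, ?_⟩
  -- integrability facts
  have hvint : ∀ v : Lp ℝ 2 μ, Integrable (⇑v) μ :=
    fun v => MemLp.integrable (by norm_num) (Lp.memLp v)
  have intF : ∀ v : Lp ℝ 2 μ, IntegrableOn (fun x => F c₀ c₁ (v x)) Ω₁ μ := by
    intro v
    have hm : AEStronglyMeasurable (fun x => F c₀ c₁ (v x)) μ :=
      (continuous_F hc₀ hc).comp_aestronglyMeasurable (Lp.aestronglyMeasurable v)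
    refine ((hvint v).mono hm ?_).integrableOn
    exact Filter.Eventually.of_forall fun x => by
      simpa [Real.norm_eq_abs] using F_bound hc₀ hc (v x)
  have intsq : ∀ h : Lp ℝ 2 μ, Integrable (fun x => h x * h x) μ := by
    intro h
    have := L2.integrable_inner (𝕜 := ℝ) h h
    simpa [RCLike.inner_apply, ← pow_two] using this
  have hnormsq : ∀ h : Lp ℝ 2 μ, ∫ x, h x * h x ∂μ = ‖h‖ ^ 2 := by
    intro h
    have h1 : (inner ℝ h h : ℝ) = ‖h‖ ^ 2 := real_inner_self_eq_norm_sq h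
    rw [← h1, L2.inner_def]
    simp [RCLike.inner_apply, ← pow_two]
  have intph : ∀ h : Lp ℝ 2 μ, Integrable (fun x => phi c₀ c₁ (u x) * h x) μ := by
    intro h
    refine (hvint h).mono (hum.mul (Lp.aestronglyMeasurable h)) ?_
    refine Filter.Eventually.of_forall fun x => ?_
    rw [Real.norm_eq_abs, Real.norm_eq_abs, abs_mul]
    have h1 : |phi c₀ c₁ (u x)| ≤ 1 := by
      rw [abs_of_nonneg (phi_nonneg hc _)]; exact phi_le_one hc _
    nlinarith [abs_nonneg (h x), abs_nonneg (phi c₀ c₁ (u x))]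
  -- the key quantitative estimate
  have key : ∀ h : Lp ℝ 2 μ,
      ‖G c₀ c₁ μ Ω₁ (u + h) - G c₀ c₁ μ Ω₁ u - (innerSL ℝ W) h‖ ≤ K * ‖h‖ ^ 2 := by
    intro h
    rw [hL h]
    have hae : ∀ᵐ x ∂μ.restrict Ω₁, (u + h : Lp ℝ 2 μ) x = u x + h x :=
      ae_restrict_of_ae (Lp.coeFn_add u h)
    have hG1 : G c₀ c₁ μ Ω₁ (u + h) = ∫ x in Ω₁, F c₀ c₁ (u x + h x) ∂μ := by
      unfold G
      apply integral_congr_ae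
      filter_upwards [hae] with x hx
      rw [hx]
    have int1 : IntegrableOn (fun x => F c₀ c₁ (u x + h x)) Ω₁ μ := by
      apply (intF (u + h)).congr
      filter_upwards [hae] with x hx
      rw [hx]
    have int2 := intF u
    have int3 : IntegrableOn (fun x => phi c₀ c₁ (u x) * h x) Ω₁ μ := (intph h).integrableOn
    have int4 : IntegrableOn (fun x => h x * h x) Ω₁ μ := (intsq h).integrableOn
    rw [hG1]
    show ‖(∫ x in Ω₁, F c₀ c₁ (u x + h x) ∂μ) - (∫ x in Ω₁, F c₀ c₁ (u x) ∂μ)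
      - ∫ x in Ω₁, phi c₀ c₁ (u x) * h x ∂μ‖ ≤ K * ‖h‖ ^ 2
    have hsub : ∫ x in Ω₁,
        (F c₀ c₁ (u x + h x) - F c₀ c₁ (u x) - phi c₀ c₁ (u x) * h x) ∂μ
        = (∫ x in Ω₁, F c₀ c₁ (u x + h x) ∂μ) - (∫ x in Ω₁, F c₀ c₁ (u x) ∂μ)
          - ∫ x in Ω₁, phi c₀ c₁ (u x) * h x ∂μ := by
      have int12 : IntegrableOn
          (fun x => F c₀ c₁ (u x + h x) - F c₀ c₁ (u x)) Ω₁ μ := int1.sub int2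
      rw [integral_sub int12 int3, integral_sub int1 int2]
    rw [← hsub]
    have hb : ∀ᵐ x ∂μ.restrict Ω₁,
        ‖F c₀ c₁ (u x + h x) - F c₀ c₁ (u x) - phi c₀ c₁ (u x) * h x‖ ≤ K * (h x * h x) := by
      refine Filter.Eventually.of_forall fun x => ?_
      have := F_taylor hc₀ hc (u x) (h x)
      rw [Real.norm_eq_abs]
      calc |F c₀ c₁ (u x + h x) - F c₀ c₁ (u x) - phi c₀ c₁ (u x) * h x|
          ≤ K * (h x) ^ 2 := this
        _ = K * (h x * h x) := by ring
    calc ‖∫ x in Ω₁, (F c₀ c₁ (u x + h x) - F c₀ c₁ (u x) - phi c₀ c₁ (u x) * h x) ∂μ‖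
        ≤ ∫ x in Ω₁, K * (h x * h x) ∂μ := norm_integral_le_of_norm_le (int4.const_mul K) hb
      _ = K * ∫ x in Ω₁, h x * h x ∂μ := integral_const_mul K _
      _ ≤ K * ∫ x, h x * h x ∂μ := by
          refine mul_le_mul_of_nonneg_left ?_ hK.le
          exact setIntegral_le_integral (intsq h)
            (Filter.Eventually.of_forall fun x => mul_self_nonneg _)
      _ = K * ‖h‖ ^ 2 := by rw [hnormsq h]
  rw [hasFDerivAt_iff_isLittleO_nhds_zero]
  rw [Asymptotics.isLittleO_iff]
  intro c hcpos
  have hev : ∀ᶠ h : Lp ℝ 2 μ in nhds 0, ‖h‖ < c / K := by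
    filter_upwards [Metric.ball_mem_nhds (0 : Lp ℝ 2 μ) (div_pos hcpos hK)] with h hh
    simpa [mem_ball_zero_iff] using hh
  filter_upwards [hev] with h hh
  have h1 : K * ‖h‖ ≤ c := by
    rw [mul_comm]
    exact (le_div_iff₀ hK).mp hh.le
  calc ‖G c₀ c₁ μ Ω₁ (u + h) - G c₀ c₁ μ Ω₁ u - (innerSL ℝ W) h‖
      ≤ K * ‖h‖ ^ 2 := key h
    _ = (K * ‖h‖) * ‖h‖ := by ring
    _ ≤ c * ‖h‖ := mul_le_mul_of_nonneg_right h1 (norm_nonneg h)
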